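/- Let K be a field of characteristic zero, n ≥ 2, and let D = ∂_{x_1} + Σ_{i=2}^{n} (a_i·x_i + b_i)·∂_{x_i} be the K-derivation of K[x_1,…,x_n] with a_i, b_i ∈ K[x_1,…,x_{i-1}] for each i. If a_n has degree at least 1 in the variable x_{n-1}, then x_n does not belong to Im D = D(K[x_1,…,x_n]); that is, there is no f ∈ K[x_1,…,x_n] with D(f) = x_n. -/

import Mathlib

open MvPolynomial

/-- A `K`-subspace `M` of `R` is a Mathieu–Zhao space if for all `a, b ∈ R` such that
`a ^ m ∈ M` for all `m ≥ 1`, there exists `N` such that `b * a ^ m ∈ M` for all `m ≥ N`. -/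
def IsMathieuZhao (K : Type*) {R : Type*} [Field K] [CommRing R] [Algebra K R]
    (M : Submodule K R) : Prop :=
  ∀ a b : R, (∀ m : ℕ, 1 ≤ m → a ^ m ∈ M) →
    ∃ N : ℕ, ∀ m : ℕ, N ≤ m → b * a ^ m ∈ M

/-- A `K`-derivation `D` of `R` is simple if the only ideals `I` of `R` with `D(I) ⊆ I`
are `0` and `R`. -/
def Derivation.IsSimple {K R : Type*} [CommRing K] [CommRing R] [Algebra K R]
    (D : Derivation K R R) : Prop :=
  ∀ I : Ideal R, (∀ a ∈ I, D a ∈ I) → I = ⊥ ∨ I = ⊤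

private lemma coeff_pderiv' {σ K : Type*} [CommSemiring K] [DecidableEq σ] (i : σ)
    (f : MvPolynomial σ K) (u : σ →₀ ℕ) :
    coeff u (pderiv i f) = (u i + 1 : ℕ) • coeff (u + Finsupp.single i 1) f := by
  induction f using MvPolynomial.induction_on' with
  | add p q hp hq => simp [hp, hq, mul_add]
  | monomial s r =>
    rw [pderiv_monomial, coeff_monomial, coeff_monomial]
    by_cases h : s = u + Finsupp.single i 1
    · subst h
      rw [if_pos (add_tsub_cancel_right _ _), if_pos rfl]
      simp [mul_comm, Finsupp.single_apply, nsmul_eq_mul]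
    · rw [if_neg h, smul_zero]
      by_cases hsi : s i = 0
      · split <;> simp [hsi]
      · rw [if_neg]
        intro hc
        apply h
        rw [← hc, tsub_add_cancel_of_le]
        rwa [Finsupp.single_le_iff, Nat.one_le_iff_ne_zero]

private lemma pderiv_comm' {σ K : Type*} [CommSemiring K] (i j : σ) (f : MvPolynomial σ K) :
    pderiv i (pderiv j f) = pderiv j (pderiv i f) := by
  classical
  by_cases h : i = j
  · subst h; rfl
  apply MvPolynomial.ext
  intro u
  rw [coeff_pderiv', coeff_pderiv', coeff_pderiv', coeff_pderiv']
  simp only [smul_smul, Finsupp.add_apply, Finsupp.single_apply, if_neg h,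
    if_neg (Ne.symm h)]
  have harg : u + Finsupp.single i 1 + Finsupp.single j 1
      = u + Finsupp.single j 1 + Finsupp.single i 1 := by
    rw [add_assoc, add_assoc, add_comm (Finsupp.single i 1)]
  rw [harg]
  congr 1
  ring

private lemma coeff_pderiv_iterate' {σ K : Type*} [CommSemiring K] [DecidableEq σ] (i : σ)
    (k : ℕ) (f : MvPolynomial σ K) (u : σ →₀ ℕ) :
    coeff u ((pderiv i)^[k] f) =
      (∏ j ∈ Finset.range k, (u i + j + 1) : ℕ) • coeff (u + Finsupp.single i k) f := by
  induction k generalizing u with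
  | zero => simp
  | succ k ih =>
    rw [Function.iterate_succ_apply', coeff_pderiv', ih, smul_smul]
    have h1 : (u + Finsupp.single i 1 : σ →₀ ℕ) i = u i + 1 := by simp
    have h2 : u + Finsupp.single i 1 + Finsupp.single i k = u + Finsupp.single i (k + 1) := by
      rw [add_assoc, ← Finsupp.single_add, add_comm 1 k]
    rw [h1, h2, Finset.prod_range_succ']
    congr 1
    rw [mul_comm]
    congr 1
    apply Finset.prod_congr rfl
    intro x _
    omega

private lemma derivation_sum_apply' {K R : Type*} [CommRing K] [CommRing R] [Algebra K R]
    {ι : Type*} (s : Finset ι) (D : ι → Derivation K R R) (x : R) :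
    (∑ i ∈ s, D i) x = ∑ i ∈ s, D i x := by
  induction s using Finset.cons_induction with
  | empty => simp
  | cons i s hi ih => rw [Finset.sum_cons, Finset.sum_cons, Derivation.add_apply, ih]

private lemma derivation_apply_eq_sum' {K : Type*} [CommRing K] {n : ℕ}
    (D : Derivation K (MvPolynomial (Fin n) K) (MvPolynomial (Fin n) K))
    (f : MvPolynomial (Fin n) K) :
    D f = ∑ i, D (X i) * pderiv i f := by
  have hD : D = ∑ i, D (X i) • pderiv i := by
    apply derivation_ext
    intro j
    rw [derivation_sum_apply']
    simp [Derivation.smul_apply, pderiv_X, Pi.single_apply]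
  conv_lhs => rw [hD]
  rw [derivation_sum_apply']
  simp [Derivation.smul_apply, smul_eq_mul]

private lemma degreeOf_mul_eq'' {K : Type*} [CommRing K] [IsDomain K] {n : ℕ} (i : Fin n)
    (p q : MvPolynomial (Fin n) K) (hp : p ≠ 0) (hq : q ≠ 0) :
    degreeOf i (p * q) = degreeOf i p + degreeOf i q := by
  cases n with
  | zero => exact i.elim0
  | succ m =>
    have h0 : ∀ (p q : MvPolynomial (Fin (m + 1)) K), p ≠ 0 → q ≠ 0 →
        degreeOf 0 (p * q) = degreeOf 0 p + degreeOf 0 q := by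
      intro p q hp hq
      rw [← natDegree_finSuccEquiv, ← natDegree_finSuccEquiv, ← natDegree_finSuccEquiv, map_mul]
      have hp' : finSuccEquiv K m p ≠ 0 := by
        intro h
        exact hp ((map_eq_zero_iff _ (AlgEquiv.injective _)).mp h)
      have hq' : finSuccEquiv K m q ≠ 0 := by
        intro h
        exact hq ((map_eq_zero_iff _ (AlgEquiv.injective _)).mp h)
      exact Polynomial.natDegree_mul hp' hq'
    set e := Equiv.swap i 0 with he
    have hinj : Function.Injective (⇑e) := e.injective
    have hren : ∀ r : MvPolynomial (Fin (m + 1)) K, r ≠ 0 → rename (⇑e) r ≠ 0 := by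
      intro r hr h
      exact hr (rename_injective _ hinj (by simpa using h))
    have key := h0 (rename (⇑e) p) (rename (⇑e) q) (hren p hp) (hren q hq)
    rw [← map_mul] at key
    have hswap : e i = 0 := Equiv.swap_apply_left i 0
    rw [← degreeOf_rename_of_injective hinj (p := p * q) i,
      ← degreeOf_rename_of_injective hinj (p := p) i,
      ← degreeOf_rename_of_injective hinj (p := q) i, hswap]
    exact key

private lemma supported_degreeOf_zero' {σ K : Type*} [CommSemiring K] {s : Set σ}
    {p : MvPolynomial σ K} (hp : p ∈ supported K s) {i : σ} (hi : i ∉ s) :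
    degreeOf i p = 0 := by
  rw [mem_supported] at hp
  refine Nat.eq_zero_of_le_zero (degreeOf_le_iff.mpr fun m hm => ?_)
  by_contra hmi
  exact hi (hp ((mem_vars i).mpr ⟨m, hm, Finsupp.mem_support_iff.mpr (by omega)⟩))

private lemma supported_pderiv_zero' {σ K : Type*} [CommSemiring K] {s : Set σ}
    {p : MvPolynomial σ K} (hp : p ∈ supported K s) {i : σ} (hi : i ∉ s) :
    pderiv i p = 0 := by
  rw [mem_supported] at hp
  exact pderiv_eq_zero_of_notMem_vars fun h => hi (hp h)

private lemma pderiv_eq_zero_of_degreeOf_zero' {σ K : Type*} [CommSemiring K]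
    {p : MvPolynomial σ K} {i : σ} (h : degreeOf i p = 0) :
    pderiv i p = 0 := by
  apply pderiv_eq_zero_of_notMem_vars
  intro hv
  obtain ⟨d, hd, hid⟩ := (mem_vars i).mp hv
  have h1 := monomial_le_degreeOf i hd
  have h2 := Finsupp.mem_support_iff.mp hid
  omega

private lemma degreeOf_pderiv_le' {σ K : Type*} [CommSemiring K]
    (p : MvPolynomial σ K) (i j : σ) :
    degreeOf i (pderiv j p) ≤ degreeOf i p := by
  classical
  refine degreeOf_le_iff.mpr fun m hm => ?_
  rw [MvPolynomial.mem_support_iff] at hm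
  rw [coeff_pderiv'] at hm
  have hc : coeff (m + Finsupp.single j 1) p ≠ 0 := fun h => hm (by rw [h, smul_zero])
  have := monomial_le_degreeOf i (Finsupp.mem_support_iff.mpr hc)
  simp only [Finsupp.add_apply, Finsupp.single_apply] at this
  omega

private lemma degreeOf_pderiv_self_lt' {σ K : Type*} [CommSemiring K]
    {p : MvPolynomial σ K} {i : σ} (h : pderiv i p ≠ 0) :
    degreeOf i (pderiv i p) + 1 ≤ degreeOf i p := by
  classical
  have key : ∀ m ∈ (pderiv i p).support, m i + 1 ≤ degreeOf i p := by
    intro m hm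
    rw [MvPolynomial.mem_support_iff, coeff_pderiv'] at hm
    have hc : coeff (m + Finsupp.single i 1) p ≠ 0 := fun h' => hm (by rw [h', smul_zero])
    have := monomial_le_degreeOf i (Finsupp.mem_support_iff.mpr hc)
    simp only [Finsupp.add_apply, Finsupp.single_eq_same] at this
    omega
  obtain ⟨m0, hm0⟩ := MvPolynomial.support_nonempty.mpr h
  have h1 := key m0 hm0
  have h2 : degreeOf i (pderiv i p) ≤ degreeOf i p - 1 :=
    degreeOf_le_iff.mpr fun m hm => by have := key m hm; omega
  omega

private lemma iterate_pderiv_facts' {σ K : Type*} [Field K] [CharZero K]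
    {p : MvPolynomial σ K} {i : σ} (hp : p ≠ 0) :
    (pderiv i)^[degreeOf i p] p ≠ 0 ∧ degreeOf i ((pderiv i)^[degreeOf i p] p) = 0 := by
  classical
  set d := degreeOf i p with hd
  constructor
  · obtain ⟨m, hm, hmax⟩ := (p.support).exists_mem_eq_sup
      (MvPolynomial.support_nonempty.mpr hp) (fun m => m i)
    have hmi : m i = d := by rw [hd, degreeOf_eq_sup, hmax]
    intro h0
    have := coeff_pderiv_iterate' i d p (m - Finsupp.single i d)
    rw [h0] at this
    have hle : Finsupp.single i d ≤ m := by
      rw [Finsupp.single_le_iff]; omega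
    rw [tsub_add_cancel_of_le hle] at this
    have hcm : coeff m p ≠ 0 := Finsupp.mem_support_iff.mp hm
    have hprod : (∏ j ∈ Finset.range d, ((m - Finsupp.single i d) i + j + 1) : ℕ) ≠ 0 := by
      refine Finset.prod_ne_zero_iff.mpr fun j _ => by omega
    rw [coeff_zero] at this
    have : ((∏ j ∈ Finset.range d, ((m - Finsupp.single i d) i + j + 1) : ℕ) : K)
        * coeff m p = 0 := by rw [← nsmul_eq_mul]; exact this.symm
    rcases mul_eq_zero.mp this with h | h
    · exact hprod (Nat.cast_eq_zero.mp h)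
    · exact hcm h
  · refine Nat.eq_zero_of_le_zero (degreeOf_le_iff.mpr fun m hm => ?_)
    rw [MvPolynomial.mem_support_iff, coeff_pderiv_iterate'] at hm
    have hc : coeff (m + Finsupp.single i d) p ≠ 0 := fun h => hm (by rw [h, smul_zero])
    have := monomial_le_degreeOf i (Finsupp.mem_support_iff.mpr hc)
    simp only [Finsupp.add_apply, Finsupp.single_eq_same] at this
    omega

/-- For `D = ∂_{x₁} + Σ_{i=2}^{n} (aᵢ xᵢ + bᵢ) ∂_{xᵢ}` with
`aᵢ, bᵢ ∈ K[x₁, …, x_{i-1}]`: if `deg_{x_{n-1}} aₙ ≥ 1`, then `xₙ ∉ Im D`. -/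
theorem statement19 (K : Type*) [Field K] [CharZero K]
    (n : ℕ) (hn : 2 ≤ n)
    (a b : Fin n → MvPolynomial (Fin n) K)
    (ha : ∀ i : Fin n, a i ∈ supported K {j : Fin n | j < i})
    (hb : ∀ i : Fin n, b i ∈ supported K {j : Fin n | j < i})
    (D : Derivation K (MvPolynomial (Fin n) K) (MvPolynomial (Fin n) K))
    (hD1 : D (X (⟨0, by omega⟩ : Fin n)) = 1)
    (hDi : ∀ i : Fin n, i ≠ ⟨0, by omega⟩ → D (X i) = a i * X i + b i)
    (hdeg : 1 ≤ degreeOf (⟨n - 2, by omega⟩ : Fin n) (a ⟨n - 1, by omega⟩)) :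
    ¬ ∃ f : MvPolynomial (Fin n) K, D f = X (⟨n - 1, by omega⟩ : Fin n) := by
  rintro ⟨f, hf⟩
  have hn1 : n - 1 < n := by omega
  have hn2 : n - 2 < n := by omega
  have hn0 : 0 < n := by omega
  set ν : Fin n := ⟨n - 1, hn1⟩ with hνdef
  set μ : Fin n := ⟨n - 2, hn2⟩ with hμdef
  set z : Fin n := ⟨0, hn0⟩ with hzdef
  replace hf : D f = X ν := hf
  replace hdeg : 1 ≤ degreeOf μ (a ν) := hdeg
  replace hD1 : D (X z) = 1 := hD1
  replace hDi : ∀ i : Fin n, i ≠ z → D (X i) = a i * X i + b i := hDi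
  have hνz : ν ≠ z := by
    simp only [hνdef, hzdef, ne_eq, Fin.mk.injEq]
    omega
  -- basic facts about D (X i) for i ≠ ν
  have hlt : ∀ i : Fin n, i ≠ ν → (i : ℕ) < n - 1 := by
    intro i hi
    have h1 : (i : ℕ) < n := i.isLt
    have h2 : (i : ℕ) ≠ n - 1 := fun h => hi (Fin.ext h)
    omega
  have hsuppν : ∀ i : Fin n, i ≠ ν → D (X i) ∈ supported K {j : Fin n | j ≠ ν} := by
    intro i hi
    by_cases hiz : i = z
    · rw [hiz, hD1]; exact Subalgebra.one_mem _
    · rw [hDi i hiz]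
      have hsub : {j : Fin n | j < i} ⊆ {j : Fin n | j ≠ ν} := by
        intro j hj
        simp only [Set.mem_setOf_eq] at hj ⊢
        intro hjν
        have := hlt i hi
        have : (j : ℕ) < (i : ℕ) := hj
        rw [hjν] at this
        simp only [hνdef] at this
        omega
      have hX : X i ∈ supported K {j : Fin n | j ≠ ν} :=
        X_mem_supported.mpr (by simp only [Set.mem_setOf_eq]; exact hi)
      exact Subalgebra.add_mem _
        (Subalgebra.mul_mem _ (supported_mono hsub (ha i)) hX)
        (supported_mono hsub (hb i))
  have hDXν : D (X ν) = a ν * X ν + b ν := hDi ν hνz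
  have haν_noν : (ν : Fin n) ∉ {j : Fin n | j < ν} := by simp
  -- degree in μ of D (X i), i ≠ ν
  have hdegμDX : ∀ i : Fin n, i ≠ ν → i ≠ μ → degreeOf μ (D (X i)) = 0 := by
    intro i hiν hiμ
    by_cases hiz : i = z
    · rw [hiz, hD1]
      rw [← C_1]
      exact degreeOf_C _ _
    · rw [hDi i hiz]
      have hμi : (i : ℕ) < n - 2 := by
        have h1 := hlt i hiν
        have h2 : (i : ℕ) ≠ n - 2 := fun h => hiμ (Fin.ext h)
        omega
      have hsub : {j : Fin n | j < i} ⊆ {j : Fin n | j ≠ μ} := by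
        intro j hj
        simp only [Set.mem_setOf_eq] at hj ⊢
        intro hjμ
        have : (j : ℕ) < (i : ℕ) := hj
        rw [hjμ] at this
        simp only [hμdef] at this
        omega
      have hX : X i ∈ supported K {j : Fin n | j ≠ μ} :=
        X_mem_supported.mpr (by simp only [Set.mem_setOf_eq]; exact hiμ)
      refine supported_degreeOf_zero' (s := {j : Fin n | j ≠ μ}) ?_ (by simp)
      exact Subalgebra.add_mem _
        (Subalgebra.mul_mem _ (supported_mono hsub (ha i)) hX)
        (supported_mono hsub (hb i))
  have hdegμDXμ : degreeOf μ (D (X μ)) ≤ 1 := by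
    by_cases hμz : μ = z
    · rw [hμz, hD1, ← C_1]
      rw [degreeOf_C]
      omega
    · rw [hDi μ hμz]
      have hμnot : μ ∉ {j : Fin n | j < μ} := by simp
      have haμ : degreeOf μ (a μ) = 0 := supported_degreeOf_zero' (ha μ) hμnot
      have hbμ : degreeOf μ (b μ) = 0 := supported_degreeOf_zero' (hb μ) hμnot
      refine le_trans (degreeOf_add_le _ _ _) ?_
      have h1 : degreeOf μ (a μ * X μ) ≤ 1 := by
        refine le_trans (degreeOf_mul_le _ _ _) ?_
        rw [haμ]
        have : degreeOf μ (X μ : (MvPolynomial (Fin n) K)) ≤ 1 := by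
          classical
          rw [degreeOf_X]
          simp
        omega
      omega
  -- D does not increase μ-degree on polynomials without ν
  have hDdegμ : ∀ g : (MvPolynomial (Fin n) K), degreeOf ν g = 0 → degreeOf μ (D g) ≤ degreeOf μ g := by
    intro g hg
    rw [derivation_apply_eq_sum' D g]
    refine le_trans (degreeOf_sum_le _ _ _) ?_
    refine Finset.sup_le fun i _ => ?_
    by_cases hiν : i = ν
    · rw [hiν, pderiv_eq_zero_of_degreeOf_zero' hg, mul_zero, degreeOf_zero]
      omega
    by_cases hpz : pderiv i g = 0
    · rw [hpz, mul_zero, degreeOf_zero]; omega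
    refine le_trans (degreeOf_mul_le _ _ _) ?_
    by_cases hiμ : i = μ
    · subst hiμ
      have h1 := degreeOf_pderiv_self_lt' hpz
      have h2 := hdegμDXμ
      omega
    · rw [hdegμDX i hiν hiμ]
      have := degreeOf_pderiv_le' g μ i
      omega
  -- commutation relation
  have hpaν : pderiv ν (a ν) = 0 := supported_pderiv_zero' (ha ν) haν_noν
  have hpbν : pderiv ν (b ν) = 0 :=
    supported_pderiv_zero' (hb ν) (by simp)
  have hcomm : ∀ g : (MvPolynomial (Fin n) K), pderiv ν (D g) = D (pderiv ν g) + a ν * pderiv ν g := by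
    intro g
    rw [derivation_apply_eq_sum' D g, map_sum, derivation_apply_eq_sum' D (pderiv ν g)]
    have hterm : ∀ i : Fin n, pderiv ν (D (X i) * pderiv i g)
        = (if i = ν then a ν else 0) * pderiv i g + D (X i) * pderiv i (pderiv ν g) := by
      intro i
      rw [pderiv_mul, pderiv_comm' ν i g]
      congr 2
      by_cases hiν : i = ν
      · subst hiν
        rw [if_pos rfl, hDXν]
        rw [map_add, pderiv_mul, hpaν, hpbν, pderiv_X_self]
        ring
      · rw [if_neg hiν]
        exact supported_pderiv_zero' (hsuppν i hiν) (by simp)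
    rw [Finset.sum_congr rfl fun i _ => hterm i, Finset.sum_add_distrib]
    have hsum1 : (∑ i : Fin n, (if i = ν then a ν else 0) * pderiv i g)
        = a ν * pderiv ν g := by
      simp only [ite_mul, zero_mul]
      rw [Finset.sum_ite_eq' Finset.univ ν (fun i => a ν * pderiv i g)]
      simp
    rw [hsum1, add_comm]
  -- iterated relation
  have hiter : ∀ k : ℕ, D ((pderiv ν)^[k] f) + ((k : ℕ) : (MvPolynomial (Fin n) K)) * (a ν * (pderiv ν)^[k] f)
      = (pderiv ν)^[k] (X ν) := by
    intro k
    induction k with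
    | zero => simpa using hf
    | succ k ih =>
      have h := congrArg (pderiv ν) ih
      rw [map_add, hcomm ((pderiv ν)^[k] f), pderiv_mul] at h
      have hcast : pderiv ν ((k : ℕ) : (MvPolynomial (Fin n) K)) = 0 := by
        rw [← C_eq_coe_nat, pderiv_C]
      rw [hcast, zero_mul, zero_add, pderiv_mul, hpaν, zero_mul, zero_add] at h
      simp only [Function.iterate_succ_apply']
      push_cast

      linear_combination h
  -- main case analysis
  have hf0 : f ≠ 0 := by
    intro h
    rw [h, map_zero] at hf
    exact X_ne_zero ν hf.symm
  set d := degreeOf ν f with hdd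
  rcases Nat.eq_zero_or_pos d with hd0 | hd1
  · -- f has no ν: D f has ν-degree 0, but X ν has ν-degree 1
    have h1 : degreeOf ν (D f) ≤ 0 := by
      rw [derivation_apply_eq_sum' D f]
      refine le_trans (degreeOf_sum_le _ _ _) ?_
      refine Finset.sup_le fun i _ => ?_
      by_cases hiν : i = ν
      · rw [hiν, pderiv_eq_zero_of_degreeOf_zero' hd0, mul_zero, degreeOf_zero]
      · refine le_trans (degreeOf_mul_le _ _ _) ?_
        rw [supported_degreeOf_zero' (hsuppν i hiν) (show ν ∉ {j : Fin n | j ≠ ν} by simp)]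
        have := degreeOf_pderiv_le' f ν i
        omega
    rw [hf] at h1
    classical
    rw [degreeOf_X, if_pos rfl] at h1
    omega
  · set F : (MvPolynomial (Fin n) K) := (pderiv ν)^[d] f with hFdef
    obtain ⟨hF0, hFν⟩ := iterate_pderiv_facts' (i := ν) hf0
    rw [← hdd] at hF0 hFν
    have heq := hiter d
    set G : (MvPolynomial (Fin n) K) := (pderiv ν)^[d] (X ν) with hGdef
    have hGμ : degreeOf μ G = 0 := by
      rcases Nat.lt_or_ge d 2 with h2 | h2
      · have : d = 1 := by omega
        rw [hGdef, this, Function.iterate_one, pderiv_X_self, ← C_1, degreeOf_C]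
      · obtain ⟨k, hk⟩ : ∃ k, d = k + 2 := ⟨d - 2, by omega⟩
        have : G = 0 := by
          rw [hGdef, hk, show k + 2 = (k + 1) + 1 from rfl,
            Function.iterate_succ_apply, pderiv_X_self,
            Function.iterate_succ_apply, pderiv_one]
          exact Function.iterate_fixed (map_zero _) k
        rw [this, degreeOf_zero]
      -- done
    have haν0 : a ν ≠ 0 := by
      intro h
      rw [h, degreeOf_zero] at hdeg
      omega
    have hd0R : ((d : ℕ) : (MvPolynomial (Fin n) K)) ≠ 0 := Nat.cast_ne_zero.mpr (by omega)
    have hprod : ((d : ℕ) : (MvPolynomial (Fin n) K)) * (a ν * F) = G - D F := by linear_combination heq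
    have hRHS : degreeOf μ (G - D F) ≤ degreeOf μ F := by
      refine le_trans (degreeOf_sub_le _ _ _) ?_
      have h1 := hDdegμ F hFν
      rw [hGμ]
      omega
    have hLHS : degreeOf μ (((d : ℕ) : (MvPolynomial (Fin n) K)) * (a ν * F))
        = degreeOf μ (a ν) + degreeOf μ F := by
      rw [degreeOf_mul_eq'' μ _ _ hd0R (mul_ne_zero haν0 hF0),
        degreeOf_mul_eq'' μ _ _ haν0 hF0, ← C_eq_coe_nat, degreeOf_C, ← hFdef,
        Nat.zero_add]
    rw [hprod] at hLHS
    omega
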